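/- In the discrete first-price auction with grid size ε > 0 and value v ≥ 0, the bid b*(v) — where b*(v) = ε⌊v/ε⌋ if ε⌊v/ε⌋ ≠ v or v = 0, and b*(v) = v − ε if ε⌊v/ε⌋ = v ≠ 0 — is multi-leximin and is the unique multi-leximin bid. -/

import Mathlib

/-- The bid space of the discrete first-price auction with grid size `ε` and value `v`:
all grid points `ε·k` (`k ∈ ℕ`) that do not exceed `v`. -/
def Bid (ε v : ℝ) : Set ℝ :=
  {x | (∃ k : ℕ, x = ε * k) ∧ x ≤ v}

/-- Utility in the discrete first-price auction with grid size `ε` and value `v`: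
a nature state is either `some β` (the highest competing bid `β`) or `none` (no competing
bidder, so the agent always wins); the agent wins against `some β` iff `b > β`
(ties go to nature), and the utility is `v - b` upon winning and `0` otherwise. -/
noncomputable def dfpaU (ε v : ℝ) (b : Bid ε v) (η : Option (Bid ε v)) : ℝ :=
  match η with
  | none => v - (b : ℝ)
  | some β => if (β : ℝ) < (b : ℝ) then v - (b : ℝ) else 0

/-- The vector (as a list) of the utilities `(u(a,η))_{η ∈ N}` of action `a`,
rearranged in nondecreasing order (`N` finite). -/
noncomputable def sVec {A N : Type*} [Fintype N] (u : A → N → ℝ) (a : A) : List ℝ :=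
  (Finset.univ.val.map (u a)).sort (· ≤ ·)

/-- An action `a` is multi-leximin if its nondecreasingly sorted utility vector is greater
than or equal to that of every other action in the lexicographic order. -/
def MultiLeximin {A N : Type*} [Fintype N] (u : A → N → ℝ) (a : A) : Prop :=
  ∀ a' : A, sVec u a' = sVec u a ∨ List.Lex (· < ·) (sVec u a') (sVec u a)


private lemma lex_of_zeros {c' : ℝ} (hc' : 0 < c') :
    ∀ (z' : ℕ) (t l : List ℝ), (∀ i ≤ z', l[i]? = some 0) →
      List.Lex (· < ·) l (List.replicate z' 0 ++ c' :: t) := by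
  intro z'
  induction z' with
  | zero =>
    intro t l h
    have h0 := h 0 le_rfl
    cases l with
    | nil => simp at h0
    | cons a l =>
      simp at h0
      subst h0
      exact List.Lex.rel hc'
  | succ n ih =>
    intro t l h
    have h0 := h 0 (Nat.zero_le _)
    cases l with
    | nil => simp at h0
    | cons a l =>
      simp at h0
      subst h0
      rw [List.replicate_succ, List.cons_append]
      exact List.Lex.cons (ih t l (fun i hi => by
        have := h (i + 1) (by omega)
        simpa using this))

private lemma getElem?_rep_rep {z p i : ℕ} {c : ℝ}
    (h : i < z ∨ (c = 0 ∧ i < z + p)) :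
    (List.replicate z (0:ℝ) ++ List.replicate p c)[i]? = some 0 := by
  rcases h with h | ⟨hc, hi⟩
  · rw [List.getElem?_append_left (by simpa using h)]
    simp [List.getElem?_replicate, h]
  · rcases lt_or_ge i z with h | h
    · rw [List.getElem?_append_left (by simpa using h)]
      simp [List.getElem?_replicate, h]
    · rw [List.getElem?_append_right (by simpa using h)]
      subst hc
      simp [List.getElem?_replicate]
      omega

private lemma sorted_rep_rep {c : ℝ} (hc : 0 ≤ c) (z p : ℕ) :
    (List.replicate z (0:ℝ) ++ List.replicate p c).Pairwise (· ≤ ·) := by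
  rw [List.pairwise_append]
  refine ⟨?_, ?_, ?_⟩
  · exact List.pairwise_replicate.mpr (Or.inr le_rfl)
  · exact List.pairwise_replicate.mpr (Or.inr le_rfl)
  · intro x hx y hy
    rw [List.eq_of_mem_replicate hx, List.eq_of_mem_replicate hy]
    exact hc

/-- winning predicate -/
private def dfpaQ (ε v : ℝ) (b : Bid ε v) (η : Option (Bid ε v)) : Prop :=
  ∀ β, η = some β → (β : ℝ) < (b : ℝ)

open Classical in
private noncomputable def dfpaF (ε v : ℝ) [Fintype ↥(Bid ε v)] (b : Bid ε v) :
    Finset (Option (Bid ε v)) :=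
  Finset.univ.filter (fun η => ¬ dfpaQ ε v b η)

open Classical in
private noncomputable def dfpaG (ε v : ℝ) [Fintype ↥(Bid ε v)] (b : Bid ε v) :
    Finset (Option (Bid ε v)) :=
  Finset.univ.filter (fun η => dfpaQ ε v b η)

private lemma dfpaQ_none (ε v : ℝ) (b : Bid ε v) : dfpaQ ε v b none := by
  intro β h; simp at h

private lemma dfpaQ_some (ε v : ℝ) (b β : Bid ε v) :
    dfpaQ ε v b (some β) ↔ (β : ℝ) < (b : ℝ) := by
  constructor
  · exact fun h => h β rfl
  · intro h β' e
    obtain rfl := Option.some_injective _ e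
    exact h

open Classical in
private lemma dfpaU_eq (ε v : ℝ) (b : Bid ε v) (η : Option (Bid ε v)) :
    dfpaU ε v b η = if dfpaQ ε v b η then v - (b : ℝ) else 0 := by
  cases η with
  | none => simp [dfpaU, dfpaQ_none]
  | some β =>
    simp only [dfpaU]
    by_cases h : (β : ℝ) < (b : ℝ)
    · rw [if_pos h, if_pos ((dfpaQ_some ε v b β).mpr h)]
    · rw [if_neg h, if_neg (fun hq => h ((dfpaQ_some ε v b β).mp hq))]

open Classical in
private lemma sVec_dfpa (ε v : ℝ) [Fintype ↥(Bid ε v)] (b : Bid ε v) :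
    sVec (dfpaU ε v) b =
      List.replicate (dfpaF ε v b).card 0 ++ List.replicate (dfpaG ε v b).card (v - (b : ℝ)) := by
  classical
  have hvb : (0:ℝ) ≤ v - (b : ℝ) := sub_nonneg.mpr b.2.2
  have hM : (Finset.univ.val.map (dfpaU ε v b)) =
      Multiset.replicate (dfpaG ε v b).card (v - (b : ℝ)) +
        Multiset.replicate (dfpaF ε v b).card 0 := by
    conv_lhs => rw [← Multiset.filter_add_not (fun η => dfpaQ ε v b η) Finset.univ.val]
    rw [Multiset.map_add]
    congr 1
    · rw [Multiset.map_congr rfl (fun η hη => ?_), Multiset.map_const']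
      · simp only [dfpaG, Finset.card_def, Finset.filter_val]
        congr 1
      · rw [dfpaU_eq, if_pos (Multiset.mem_filter.mp hη).2]
    · rw [Multiset.map_congr rfl (fun η hη => ?_), Multiset.map_const']
      · simp only [dfpaF, Finset.card_def, Finset.filter_val]
        congr 1
      · rw [dfpaU_eq, if_neg (Multiset.mem_filter.mp hη).2]
  have hdef : sVec (dfpaU ε v) b =
      Multiset.sort (Finset.univ.val.map (dfpaU ε v b)) (· ≤ ·) := rfl
  rw [hdef]
  refine List.Perm.eq_of_pairwise' (Multiset.pairwise_sort _ _) (sorted_rep_rep hvb _ _)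
    (Multiset.coe_eq_coe.mp ?_)
  rw [Multiset.sort_eq, hM, ← Multiset.coe_add, ← Multiset.coe_replicate,
    ← Multiset.coe_replicate]
  exact add_comm _ _

/-- in the discrete first-price auction with grid size `ε > 0` and value `v ≥ 0`,
the bid `b*(v)` — where `b*(v) = ε⌊v/ε⌋` if `ε⌊v/ε⌋ ≠ v` or `v = 0`, and `b*(v) = v − ε`
if `ε⌊v/ε⌋ = v ≠ 0` — is multi-leximin and is the unique multi-leximin bid. -/
theorem dfpa_multiLeximin_unique (ε v : ℝ) (hε : 0 < ε) (hv : 0 ≤ v)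
    [Fintype ↥(Bid ε v)]
    (bstar : Bid ε v)
    (h1 : (ε * (⌊v / ε⌋ : ℝ) ≠ v ∨ v = 0) → (bstar : ℝ) = ε * (⌊v / ε⌋ : ℝ))
    (h2 : ε * (⌊v / ε⌋ : ℝ) = v ∧ v ≠ 0 → (bstar : ℝ) = v - ε) :
    MultiLeximin (dfpaU ε v) bstar ∧
      ∀ b : Bid ε v, MultiLeximin (dfpaU ε v) b → b = bstar := by
  classical
  have hbnn : ∀ b : Bid ε v, (0:ℝ) ≤ (b : ℝ) := by
    rintro ⟨x, ⟨⟨k, rfl⟩, hx⟩⟩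
    exact mul_nonneg hε.le (Nat.cast_nonneg k)
  have hble : ∀ b : Bid ε v, (b : ℝ) ≤ v := fun b => b.2.2
  have hzero : v = 0 → ∀ b : Bid ε v, b = bstar := by
    intro h0 b
    apply Subtype.ext
    have e1 := le_antisymm (h0 ▸ hble b) (hbnn b)
    have e2 := le_antisymm (h0 ▸ hble bstar) (hbnn bstar)
    rw [e1, e2]
  have hstruct : (∀ b : Bid ε v, (b:ℝ) ≤ (bstar:ℝ) ∨ (b:ℝ) = v) ∧
      (v ≠ 0 → (bstar:ℝ) < v) := by
    by_cases hc : ε * (⌊v / ε⌋ : ℝ) = v ∧ v ≠ 0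
    · have hbs : (bstar : ℝ) = v - ε := h2 hc
      have hvpos : 0 < v := lt_of_le_of_ne hv (Ne.symm hc.2)
      have hn1 : (1 : ℤ) ≤ ⌊v / ε⌋ := by
        by_contra hn
        push_neg at hn
        have : (⌊v / ε⌋ : ℝ) ≤ 0 := by exact_mod_cast Int.lt_add_one_iff.mp (by exact_mod_cast hn)
        nlinarith [hc.1]
      constructor
      · rintro ⟨x, ⟨⟨k, rfl⟩, hx⟩⟩
        rcases le_or_gt (ε * (k:ℝ)) ((bstar:ℝ)) with h | h
        · exact Or.inl h
        · right
          rw [hbs] at h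
          have hkn : (k : ℝ) ≤ (⌊v / ε⌋ : ℝ) := by
            have : ε * (k:ℝ) ≤ ε * (⌊v / ε⌋ : ℝ) := by rw [hc.1]; exact hx
            exact le_of_mul_le_mul_left this hε
          have hnk : (⌊v / ε⌋ : ℝ) - 1 < (k : ℝ) := by
            have : ε * ((⌊v / ε⌋ : ℝ) - 1) < ε * (k:ℝ) := by
              rw [mul_sub, hc.1]; simpa using h
            have := lt_of_mul_lt_mul_left this hε.le
            linarith
          have hkZ : (k : ℤ) = ⌊v / ε⌋ := by
            have a1 : (k : ℤ) ≤ ⌊v / ε⌋ := by exact_mod_cast hkn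
            have a2 : ⌊v / ε⌋ - 1 < (k : ℤ) := by exact_mod_cast hnk
            omega
          have : (k : ℝ) = (⌊v / ε⌋ : ℝ) := by exact_mod_cast hkZ
          show ε * (k:ℝ) = v
          rw [this, hc.1]
      · intro _
        rw [hbs]
        linarith
    · rw [not_and_or, not_not] at hc
      have hbs : (bstar : ℝ) = ε * (⌊v / ε⌋ : ℝ) := h1 hc
      have hfl : ε * (⌊v / ε⌋ : ℝ) ≤ v := by
        have := Int.floor_le (v / ε)
        calc ε * (⌊v / ε⌋ : ℝ) ≤ ε * (v / ε) := by
              exact mul_le_mul_of_nonneg_left this hε.le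
          _ = v := by field_simp
      constructor
      · rintro ⟨x, ⟨⟨k, rfl⟩, hx⟩⟩
        left
        have hk : (k : ℤ) ≤ ⌊v / ε⌋ := by
          apply Int.le_floor.mpr
          push_cast
          rw [le_div_iff₀ hε, mul_comm]
          exact hx
        have hk' : (k : ℝ) ≤ (⌊v / ε⌋ : ℝ) := by exact_mod_cast hk
        show ε * (k:ℝ) ≤ (bstar:ℝ)
        rw [hbs]
        exact mul_le_mul_of_nonneg_left hk' hε.le
      · intro hv0
        rcases hc with h | h
        · rw [hbs]; exact lt_of_le_of_ne hfl h
        · exact absurd h hv0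
  obtain ⟨hmax, hbst⟩ := hstruct
  have hcard : ∀ b : Bid ε v, (dfpaF ε v b).card + (dfpaG ε v b).card
      = Fintype.card (Option ↥(Bid ε v)) := by
    intro b
    rw [add_comm, ← Finset.card_univ, dfpaG, dfpaF]
    convert Finset.card_filter_add_card_filter_not
      (s := Finset.univ) (fun η => dfpaQ ε v b η) using 2
  have hGpos : ∀ b : Bid ε v, 0 < (dfpaG ε v b).card := by
    intro b
    apply Finset.card_pos.mpr
    exact ⟨none, by simp [dfpaG, dfpaQ_none]⟩
  have hFlt : ∀ b b' : Bid ε v, (b:ℝ) < (b':ℝ) →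
      (dfpaF ε v b').card < (dfpaF ε v b).card := by
    intro b b' hbb
    apply Finset.card_lt_card
    have hsub : dfpaF ε v b' ⊆ dfpaF ε v b := by
      intro η hη
      simp only [dfpaF, Finset.mem_filter, Finset.mem_univ, true_and] at hη ⊢
      exact fun hQ => hη (fun β e => lt_trans (hQ β e) hbb)
    refine (Finset.ssubset_iff_of_subset hsub).mpr ⟨some b, ?_, ?_⟩
    · simp only [dfpaF, Finset.mem_filter, Finset.mem_univ, true_and]
      rw [dfpaQ_some]
      exact lt_irrefl _
    · simp only [dfpaF, Finset.mem_filter, Finset.mem_univ, true_and, not_not]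
      rw [dfpaQ_some]
      exact hbb
  have key : ∀ b : Bid ε v, b ≠ bstar →
      List.Lex (· < ·) (sVec (dfpaU ε v) b) (sVec (dfpaU ε v) bstar) := by
    intro b hne
    have hv0 : v ≠ 0 := fun h => hne (hzero h b)
    have hcst : 0 < v - (bstar:ℝ) := sub_pos.mpr (hbst hv0)
    have hp' : (dfpaG ε v bstar).card = ((dfpaG ε v bstar).card - 1) + 1 := by
      have := hGpos bstar; omega
    rw [sVec_dfpa, sVec_dfpa ε v bstar, hp', List.replicate_succ]
    apply lex_of_zeros hcst
    intro i hi
    apply getElem?_rep_rep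
    rcases hmax b with hle | heq
    · left
      have hlt : (b:ℝ) < (bstar:ℝ) :=
        lt_of_le_of_ne hle (fun h => hne (Subtype.ext h))
      have := hFlt b bstar hlt
      omega
    · right
      refine ⟨by rw [heq]; ring, ?_⟩
      have e1 := hcard b
      have e2 := hcard bstar
      have e3 := hGpos bstar
      omega
  constructor
  · intro b
    by_cases hb : b = bstar
    · exact Or.inl (by rw [hb])
    · exact Or.inr (key b hb)
  · intro b hb
    by_contra hne
    have hlex := key b hne
    rcases hb bstar with h | h
    · rw [h] at hlex
      exact asymm hlex hlex
    · exact asymm hlex h
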